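/- For all x ∈ [a,b], the identity f_m(x) = f_0(x) - Σ_{i=1}^{m} C·g_i(x)/4^i holds, where C = (b-a)², f_0(x) = (a+b)x - ab, and g_i are the sawtooth functions g_1 = tent on [a,b], g_i = h ∘ g_{i-1}. -/

import Mathlib

/-- The uniform dyadic node ξ_{k,m} = a + k(b-a)/2^m. -/
noncomputable def node (a b : ℝ) (m k : ℕ) : ℝ := a + k * (b - a) / 2 ^ m

/-- `f` is the continuous piecewise linear interpolant of `g` at the nodes
`ξ_{k,m}`, i.e. on each subinterval it is the affine function agreeing with `g`
at the two endpoint nodes. -/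
def IsPLInterp (a b : ℝ) (m : ℕ) (g f : ℝ → ℝ) : Prop :=
  ∀ k < 2 ^ m, ∀ x ∈ Set.Icc (node a b m k) (node a b m (k + 1)),
    f x = g (node a b m k) +
      (g (node a b m (k + 1)) - g (node a b m k)) /
        (node a b m (k + 1) - node a b m k) * (x - node a b m k)
/-- The hat function on [0,1]. -/
noncomputable def hat (x : ℝ) : ℝ := if x < 1 / 2 then 2 * x else 2 * (1 - x)

/-- The tent function on [a,b]. -/
noncomputable def tent (a b x : ℝ) : ℝ := min (2 * (x - a) / (b - a)) (2 * (b - x) / (b - a))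

/-- The sawtooth functions: g₁ is the tent on [a,b], g_m = hat ∘ g_{m-1}. -/
noncomputable def saw (a b : ℝ) : ℕ → ℝ → ℝ
  | 0 => fun _ => 0
  | 1 => tent a b
  | (n + 2) => fun x => hat (saw a b (n + 1) x)

lemma node_succ (a b : ℝ) (m k : ℕ) :
    node a b m (k + 1) = node a b m k + (b - a) / 2 ^ m := by
  unfold node; push_cast; ring

lemma node_double (a b : ℝ) (m k : ℕ) :
    node a b (m + 1) (2 * k) = node a b m k := by
  unfold node; push_cast; ring

lemma hat_of_le (s : ℝ) (h : s ≤ 1 / 2) : hat s = 2 * s := by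
  unfold hat
  by_cases hs : s < 1 / 2
  · rw [if_pos hs]
  · have : s = 1 / 2 := le_antisymm h (not_lt.1 hs)
    subst this; norm_num

lemma hat_of_ge (s : ℝ) (h : 1 / 2 ≤ s) : hat s = 2 * (1 - s) := by
  unfold hat
  rw [if_neg (not_lt.2 h)]

lemma exists_interval (a b : ℝ) (hab : a < b) (n : ℕ) (x : ℝ) (hx : x ∈ Set.Icc a b) :
    ∃ k < 2 ^ n, x ∈ Set.Icc (node a b n k) (node a b n (k + 1)) := by
  have hba : (0:ℝ) < b - a := by linarith
  have hNR : (0:ℝ) < 2 ^ n := by positivity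
  have hNpos : 0 < 2 ^ n := Nat.pow_pos (by norm_num)
  set t : ℝ := (x - a) * 2 ^ n / (b - a) with ht
  have ht0 : 0 ≤ t := div_nonneg (mul_nonneg (by linarith [hx.1]) (by positivity)) hba.le
  have htN : t ≤ 2 ^ n := by
    rw [ht, div_le_iff₀ hba]; nlinarith [hx.2]
  set k : ℕ := min ⌊t⌋₊ (2 ^ n - 1) with hkdef
  have hcast : ((2 ^ n : ℕ) : ℝ) = (2:ℝ) ^ n := by push_cast; ring
  have hklo : (k : ℝ) ≤ t := by
    calc (k:ℝ) ≤ (⌊t⌋₊ : ℝ) := by exact_mod_cast min_le_left _ _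
      _ ≤ t := Nat.floor_le ht0
  have hkhi : t ≤ (k : ℝ) + 1 := by
    rcases le_or_gt ⌊t⌋₊ (2 ^ n - 1) with h | h
    · rw [hkdef, min_eq_left h]; exact (Nat.lt_floor_add_one t).le
    · have h2 : 2 ^ n ≤ ⌊t⌋₊ := by omega
      have h3 : (2:ℝ) ^ n ≤ t := by
        calc (2:ℝ)^n = ((2^n : ℕ):ℝ) := hcast.symm
          _ ≤ (⌊t⌋₊ : ℝ) := by exact_mod_cast h2
          _ ≤ t := Nat.floor_le ht0
      have hkr : (k : ℝ) = (2:ℝ)^n - 1 := by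
        rw [hkdef, min_eq_right h.le, Nat.cast_sub hNpos, hcast, Nat.cast_one]
      linarith
  have hklt : k < 2 ^ n := by
    have h := min_le_right ⌊t⌋₊ (2 ^ n - 1)
    omega
  refine ⟨k, hklt, ?_, ?_⟩
  · unfold node
    rw [ht, le_div_iff₀ hba] at hklo
    have : (k:ℝ) * (b - a) / 2 ^ n ≤ x - a := by
      rw [div_le_iff₀ hNR]; nlinarith
    linarith
  · unfold node
    push_cast
    rw [ht, div_le_iff₀ hba] at hkhi
    have : x - a ≤ ((k:ℝ) + 1) * (b - a) / 2 ^ n := by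
      rw [le_div_iff₀ hNR]; nlinarith
    linarith

lemma saw_formula (a b : ℝ) (hab : a < b) :
    ∀ n k, k < 2 ^ (n + 1) → ∀ x ∈ Set.Icc (node a b (n + 1) k) (node a b (n + 1) (k + 1)),
      saw a b (n + 1) x =
        if Even k then 2 ^ (n + 1) * (x - node a b (n + 1) k) / (b - a)
        else 2 ^ (n + 1) * (node a b (n + 1) (k + 1) - x) / (b - a) := by
  have hba : (0:ℝ) < b - a := by linarith
  intro n
  induction n with
  | zero =>
    intro k hk x hx
    interval_cases k
    · have h0 : node a b 1 0 = a := by unfold node; push_cast; ring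
      have h1 : node a b 1 (0 + 1) = a + (b - a) / 2 := by unfold node; push_cast; ring
      rw [h0, h1] at hx
      rw [if_pos Even.zero, h0]
      show tent a b x = _
      unfold tent
      rw [min_eq_left (by rw [div_le_div_iff₀ hba hba]; nlinarith [hx.1, hx.2])]
      ring
    · have h1 : node a b 1 1 = a + (b - a) / 2 := by unfold node; push_cast; ring
      have h2 : node a b 1 (1 + 1) = b := by unfold node; push_cast; ring
      rw [h1, h2] at hx
      rw [if_neg (by decide), h2]
      show tent a b x = _
      unfold tent
      rw [min_eq_right (by rw [div_le_div_iff₀ hba hba]; nlinarith [hx.1, hx.2])]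
      ring
  | succ n ih =>
    intro k hk x hx
    simp only [show n + 1 + 1 = n + 2 from rfl] at hk hx ⊢
    obtain ⟨j, r, hr, rfl⟩ : ∃ j r, r < 2 ∧ k = 2 * j + r :=
      ⟨k / 2, k % 2, Nat.mod_lt _ (by norm_num), (Nat.div_add_mod k 2).symm⟩
    have hj : j < 2 ^ (n + 1) := by
      rw [pow_succ] at hk; omega
    set ξ : ℝ := node a b (n + 1) j with hξ
    set D : ℝ := (b - a) / 2 ^ (n + 2) with hD
    have hDpos : 0 < D := by positivity
    have hD2 : (b - a) / 2 ^ (n + 1) = 2 * D := by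
      rw [hD, pow_succ]; field_simp; ring
    have e0 : node a b (n + 2) (2 * j) = ξ := node_double a b (n + 1) j
    have e0' : node a b (n + 2) (2 * j + 0) = ξ := e0
    have e1 : node a b (n + 2) (2 * j + 1) = ξ + D := by
      rw [node_succ, e0, hD]
    have e1' : node a b (n + 2) (2 * j + 0 + 1) = ξ + D := e1
    have e2 : node a b (n + 2) (2 * j + 1 + 1) = ξ + 2 * D := by
      rw [node_succ, e1, hD]; ring
    have eξ1 : node a b (n + 1) (j + 1) = ξ + 2 * D := by
      rw [node_succ, hD2, hξ]
    have hxl : ξ ≤ x := by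
      have h1 := hx.1
      interval_cases r
      · rw [e0'] at h1; exact h1
      · rw [e1] at h1; linarith
    have hxu : x ≤ ξ + 2 * D := by
      have h2 := hx.2
      interval_cases r
      · rw [e1'] at h2; linarith
      · rw [e2] at h2; exact h2
    have hIH := ih j hj x ⟨hxl, by rw [eξ1]; exact hxu⟩
    rw [← hξ] at hIH
    have hsaw : saw a b (n + 2) x = hat (saw a b (n + 1) x) := rfl
    have key : ∀ y : ℝ, 2 ^ (n + 1) * y / (b - a) = y / (2 * D) := by
      intro y; rw [hD]; field_simp; ring
    have key2 : ∀ y : ℝ, 2 ^ (n + 2) * y / (b - a) = y / D := by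
      intro y; rw [hD]; field_simp
    have hodd : ¬ Even (2 * j + 1) := by
      simp [Nat.even_add_one]
    rcases Nat.even_or_odd j with hje | hjo
    · rw [if_pos hje, key] at hIH
      interval_cases r
      · simp only [Nat.add_zero] at hx ⊢
        have hxu' : x ≤ ξ + D := by
          have h2 := hx.2; rw [e1] at h2; exact h2
        have hs : saw a b (n + 1) x ≤ 1 / 2 := by
          rw [hIH, div_le_iff₀ (by positivity)]; linarith
        rw [hsaw, hat_of_le _ hs, hIH, if_pos (even_two_mul j), e0, key2]
        field_simp
      · have hxl' : ξ + D ≤ x := by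
          have h1 := hx.1; rw [e1] at h1; exact h1
        have hs : 1 / 2 ≤ saw a b (n + 1) x := by
          rw [hIH, le_div_iff₀ (by positivity)]; linarith
        rw [hsaw, hat_of_ge _ hs, hIH, if_neg hodd, e2, key2]
        field_simp
        ring
    · rw [if_neg (Nat.not_even_iff_odd.2 hjo), eξ1, key] at hIH
      interval_cases r
      · simp only [Nat.add_zero] at hx ⊢
        have hxu' : x ≤ ξ + D := by
          have h2 := hx.2; rw [e1] at h2; exact h2
        have hs : 1 / 2 ≤ saw a b (n + 1) x := by
          rw [hIH, le_div_iff₀ (by positivity)]; linarith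
        rw [hsaw, hat_of_ge _ hs, hIH, if_pos (even_two_mul j), e0, key2]
        field_simp
        ring
      · have hxl' : ξ + D ≤ x := by
          have h1 := hx.1; rw [e1] at h1; exact h1
        have hs : saw a b (n + 1) x ≤ 1 / 2 := by
          rw [hIH, div_le_iff₀ (by positivity)]; linarith
        rw [hsaw, hat_of_le _ hs, hIH, if_neg hodd, e2, key2]
        field_simp

lemma interp_step (a b : ℝ) (hab : a < b) (f : ℕ → ℝ → ℝ)
    (hf : ∀ n, IsPLInterp a b n (fun x => x ^ 2) (f n)) (n : ℕ) (x : ℝ)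
    (hx : x ∈ Set.Icc a b) :
    f n x - f (n + 1) x = (b - a) ^ 2 * saw a b (n + 1) x / 4 ^ (n + 1) := by
  have hba : (0:ℝ) < b - a := by linarith
  obtain ⟨k, hk, hxk⟩ := exists_interval a b hab (n + 1) x hx
  obtain ⟨j, r, hr, rfl⟩ : ∃ j r, r < 2 ∧ k = 2 * j + r :=
    ⟨k / 2, k % 2, Nat.mod_lt _ (by norm_num), (Nat.div_add_mod k 2).symm⟩
  have hj : j < 2 ^ n := by rw [pow_succ] at hk; omega
  set ξ : ℝ := node a b n j with hξ
  set D : ℝ := (b - a) / 2 ^ (n + 1) with hD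
  have hDpos : 0 < D := by positivity
  have hne : D ≠ 0 := ne_of_gt hDpos
  have hD2 : (b - a) / 2 ^ n = 2 * D := by
    rw [hD, pow_succ]; field_simp
  have e0 : node a b (n + 1) (2 * j) = ξ := node_double a b n j
  have e0' : node a b (n + 1) (2 * j + 0) = ξ := e0
  have e1 : node a b (n + 1) (2 * j + 1) = ξ + D := by rw [node_succ, e0, hD]
  have e1' : node a b (n + 1) (2 * j + 0 + 1) = ξ + D := e1
  have e2 : node a b (n + 1) (2 * j + 1 + 1) = ξ + 2 * D := by
    rw [node_succ, e1, hD]; ring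
  have eξ1 : node a b n (j + 1) = ξ + 2 * D := by rw [node_succ, hD2, hξ]
  have hxl : ξ ≤ x := by
    have h1 := hxk.1
    interval_cases r
    · rw [e0'] at h1; exact h1
    · rw [e1] at h1; linarith
  have hxu : x ≤ ξ + 2 * D := by
    have h2 := hxk.2
    interval_cases r
    · rw [e1'] at h2; linarith
    · rw [e2] at h2; exact h2
  have hfn := hf n j hj x ⟨hxl, by rw [eξ1]; exact hxu⟩
  rw [eξ1] at hfn
  simp only at hfn
  rw [← hξ] at hfn
  rw [show ξ + 2 * D - ξ = 2 * D by ring] at hfn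
  have h24 : ((2:ℝ) ^ (n + 1)) ^ 2 = 4 ^ (n + 1) := by
    rw [← pow_mul, mul_comm, pow_mul]; norm_num
  have h4 : (b - a) ^ 2 / 4 ^ (n + 1) = D ^ 2 := by
    rw [hD, div_pow, h24]
  have key2 : ∀ y : ℝ, 2 ^ (n + 1) * y / (b - a) = y / D := by
    intro y; rw [hD]; field_simp
  have hsaw := saw_formula a b hab n (2 * j + r) hk x hxk
  have hfn1 := hf (n + 1) (2 * j + r) hk x hxk
  have hgoal : (b - a) ^ 2 * saw a b (n + 1) x / 4 ^ (n + 1) = D ^ 2 * saw a b (n + 1) x := by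
    rw [mul_comm ((b-a)^2) _, mul_div_assoc, h4, mul_comm]
  rw [hgoal]
  simp only at hfn1
  interval_cases r
  · simp only [Nat.add_zero] at hsaw hfn1
    rw [if_pos (even_two_mul j), e0, key2] at hsaw
    rw [e0, e1] at hfn1
    rw [show ξ + D - ξ = D by ring] at hfn1
    rw [hfn, hfn1, hsaw]
    field_simp
    ring
  · rw [if_neg (by simp [Nat.even_add_one]), e2, key2] at hsaw
    rw [e1, e2] at hfn1
    rw [show ξ + 2 * D - (ξ + D) = D by ring] at hfn1
    rw [hfn, hfn1, hsaw]
    field_simp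
    ring

/-- the telescoping identity
f_m(x) = f₀(x) - Σ_{i=1}^m C·g_i(x)/4^i with C = (b-a)² and f₀(x) = (a+b)x - ab. -/
theorem interp_telescope (a b : ℝ) (hab : a < b) (m : ℕ) (f : ℕ → ℝ → ℝ)
    (hf : ∀ n, IsPLInterp a b n (fun x => x ^ 2) (f n)) :
    ∀ x ∈ Set.Icc a b,
      f m x = ((a + b) * x - a * b) -
        ∑ i ∈ Finset.Icc 1 m, (b - a) ^ 2 * saw a b i x / 4 ^ i := by
  intro x hx
  have hba : (0:ℝ) < b - a := by linarith
  have hf0 : f 0 x = (a + b) * x - a * b := by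
    have h0 : node a b 0 0 = a := by unfold node; push_cast; ring
    have h1 : node a b 0 (0 + 1) = b := by unfold node; push_cast; ring
    have h := hf 0 0 (by norm_num) x (by rw [h0, h1]; exact hx)
    rw [h0, h1] at h
    simp only at h
    rw [h]
    field_simp
    ring
  induction m with
  | zero => simpa using hf0
  | succ m ih =>
    rw [Finset.sum_Icc_succ_top (by omega : 1 ≤ m + 1)]
    have hstep := interp_step a b hab f hf m x hx
    linarith [ih]
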